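/- Let E be a directed graph and suppose α = e_1⋯e_m and β = f_1⋯f_k are two distinct simple closed paths based at the same vertex v ∈ E^0. Then there exists a vertex w lying on α or β and two distinct edges e ≠ f with s(e) = s(f) = w such that there is a path from r(e) to w and a path from r(f) to w; that is, w belongs to the set H_0 := {u ∈ E^0 : there exist e ≠ f ∈ E^1 with s(e) = s(f) = u and paths from r(e) to u and from r(f) to u}. -/

import Mathlib

/-- A directed graph `E = (E⁰, E¹, r, s)`: `V` is the vertex set `E⁰`, `Edg` is the
edge set `E¹`, and `s`, `r` give the source and range of each edge. -/
structure DGraph (V : Type*) (Edg : Type*) where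
  s : Edg → V
  r : Edg → V

namespace DGraph

variable {V Edg : Type*}

/-- There is an edge from `v` to `w`. -/
def Adj (G : DGraph V Edg) (v w : V) : Prop := ∃ e, G.s e = v ∧ G.r e = w

/-- There is a path (possibly of length zero, i.e. a vertex) from `v` to `w`. -/
def Reaches (G : DGraph V Edg) : V → V → Prop := Relation.ReflTransGen G.Adj

/-- A subset `X ⊆ E⁰` is hereditary if `r(e) ∈ X` whenever `s(e) ∈ X`. -/
def Hereditary (G : DGraph V Edg) (X : Set V) : Prop := ∀ e, G.s e ∈ X → G.r e ∈ X

/-- A vertex is a finite emitter if `s⁻¹(v)` is finite and nonempty. -/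
def FiniteEmitter (G : DGraph V Edg) (v : V) : Prop :=
  {e | G.s e = v}.Finite ∧ {e | G.s e = v}.Nonempty

/-- A subset `X ⊆ E⁰` is saturated if every finite emitter `v` with
`r(s⁻¹(v)) ⊆ X` lies in `X`. -/
def Saturated (G : DGraph V Edg) (X : Set V) : Prop :=
  ∀ v, FiniteEmitter G v → (∀ e, G.s e = v → G.r e ∈ X) → v ∈ X

/-- The hereditary saturated closure of `X`: the smallest hereditary and saturated
subset of `E⁰` containing `X`. -/
def satClosure (G : DGraph V Edg) (X : Set V) : Set V :=
  ⋂₀ {Y | Hereditary G Y ∧ Saturated G Y ∧ X ⊆ Y}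

/-- The consecutive edges of a path match up: `r(eᵢ) = s(eᵢ₊₁)`. -/
def IsChain (G : DGraph V Edg) (p : List Edg) : Prop :=
  List.Chain' (fun e f => G.r e = G.s f) p

/-- `p` is a closed path (of length ≥ 1) based at `v`. -/
def IsClosedPathAt (G : DGraph V Edg) (p : List Edg) (v : V) : Prop :=
  ∃ hne : p ≠ [], IsChain G p ∧ G.s (p.head hne) = v ∧ G.r (p.getLast hne) = v

/-- `p` is a closed path (of length ≥ 1). -/
def IsClosedPath (G : DGraph V Edg) (p : List Edg) : Prop := ∃ v, IsClosedPathAt G p v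

/-- The vertex set `α⁰ = {s(e₁), …, s(eₙ)}` of a path. -/
def pathVerts (G : DGraph V Edg) (p : List Edg) : Set V := {w | ∃ e ∈ p, G.s e = w}

/-- An exit of a closed path `e₁⋯eₙ` is an edge `f` with `s(f) = s(eᵢ)` and
`f ≠ eᵢ` for some `i`. -/
def IsExitOf (G : DGraph V Edg) (f : Edg) (p : List Edg) : Prop :=
  ∃ e ∈ p, G.s f = G.s e ∧ f ≠ e

/-- `p` is a simple closed path based at `v`: a closed path whose sources are
pairwise distinct. -/
def IsSimpleClosedPathAt (G : DGraph V Edg) (p : List Edg) (v : V) : Prop :=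
  IsClosedPathAt G p v ∧ (p.map G.s).Nodup

end DGraph
namespace DGraph

variable {V Edg : Type*}

lemma reach_src (G : DGraph V Edg) : ∀ (p : List Edg), G.IsChain p → ∀ e ∈ p, ∀ h : p ≠ [],
    G.Reaches (G.s (p.head h)) (G.s e)
  | [], _, e, he, _ => absurd he (List.not_mem_nil)
  | a :: t, hc, e, he, h => by
      simp only [List.head_cons]
      rcases List.mem_cons.mp he with rfl | he'
      · exact Relation.ReflTransGen.refl
      · have ht : t ≠ [] := List.ne_nil_of_mem he'
        have hc' : G.IsChain t := hc.tail
        have hlink : G.r a = G.s (t.head ht) := by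
          cases t with
          | nil => exact absurd rfl ht
          | cons b t' => exact (List.isChain_cons_cons.mp hc).1
        have h1 : G.Reaches (G.s a) (G.s (t.head ht)) :=
          Relation.ReflTransGen.single ⟨a, rfl, hlink⟩
        exact h1.trans (reach_src G t hc' e he' ht)

lemma reach_full (G : DGraph V Edg) : ∀ (p : List Edg), G.IsChain p → ∀ h : p ≠ [],
    G.Reaches (G.s (p.head h)) (G.r (p.getLast h))
  | [], _, h => absurd rfl h
  | a :: t, hc, h => by
      simp only [List.head_cons]
      cases t with
      | nil => exact Relation.ReflTransGen.single ⟨a, rfl, rfl⟩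
      | cons b t' =>
        have ht : (b :: t') ≠ [] := List.cons_ne_nil _ _
        have hlink : G.r a = G.s b := (List.isChain_cons_cons.mp hc).1
        have h1 : G.Reaches (G.s a) (G.s b) :=
          Relation.ReflTransGen.single ⟨a, rfl, hlink⟩
        have h2 := reach_full G (b :: t') hc.tail ht
        rw [List.getLast_cons ht]
        exact h1.trans h2

lemma reach_end (G : DGraph V Edg) : ∀ (p : List Edg), G.IsChain p → ∀ e ∈ p, ∀ h : p ≠ [],
    G.Reaches (G.r e) (G.r (p.getLast h))
  | [], _, e, he, _ => absurd he (List.not_mem_nil)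
  | a :: t, hc, e, he, h => by
      cases t with
      | nil =>
        rcases List.mem_cons.mp he with rfl | he'
        · exact Relation.ReflTransGen.refl
        · exact absurd he' (List.not_mem_nil)
      | cons b t' =>
        have ht : (b :: t') ≠ [] := List.cons_ne_nil _ _
        rw [List.getLast_cons ht]
        rcases List.mem_cons.mp he with rfl | he'
        · have hlink : G.r e = G.s b := (List.isChain_cons_cons.mp hc).1
          have := reach_full G (b :: t') hc.tail ht
          simp only [List.head_cons] at this
          rw [hlink]
          exact this
        · exact reach_end G (b :: t') hc.tail e he' ht

lemma firstDiff {X : Type*} : ∀ (α β : List X), α ≠ β →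
    (∃ (p a b : List X) (e f : X), α = p ++ e :: a ∧ β = p ++ f :: b ∧ e ≠ f) ∨
    (∃ t, t ≠ [] ∧ α = β ++ t) ∨ (∃ t, t ≠ [] ∧ β = α ++ t)
  | [], β, h => Or.inr (Or.inr ⟨β, Ne.symm h, rfl⟩)
  | a :: α', [], _ => Or.inr (Or.inl ⟨a :: α', List.cons_ne_nil _ _, rfl⟩)
  | a :: α', b :: β', h => by
      by_cases hab : a = b
      · subst hab
        have h' : α' ≠ β' := fun hh => h (by rw [hh])
        rcases firstDiff α' β' h' with ⟨p, x, y, e, f, h1, h2, h3⟩ | ⟨t, ht, h1⟩ | ⟨t, ht, h1⟩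
        · exact Or.inl ⟨a :: p, x, y, e, f, by simp [h1], by simp [h2], h3⟩
        · exact Or.inr (Or.inl ⟨t, ht, by simp [h1]⟩)
        · exact Or.inr (Or.inr ⟨t, ht, by simp [h1]⟩)
      · exact Or.inl ⟨[], α', β', a, b, rfl, rfl, hab⟩

end DGraph
namespace DGraph

lemma no_proper_extension {V Edg : Type*} (G : DGraph V Edg) (v : V) (p t : List Edg)
    (ht : t ≠ []) (hc : G.IsChain (p ++ t)) (hnd : ((p ++ t).map G.s).Nodup)
    (hp : G.IsClosedPathAt p v) : False := by
  obtain ⟨hpne, hpc, hph, hpl⟩ := hp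
  have hlink : G.r (p.getLast hpne) = G.s (t.head ht) := by
    have h1 := (List.isChain_append.mp hc).2.2
    exact h1 _ (by simp [List.getLast?_eq_getLast hpne]) _
      (by simp [List.head?_eq_head ht])
  rw [List.map_append] at hnd
  have hdisj := List.disjoint_of_nodup_append hnd
  have hv1 : v ∈ p.map G.s := by
    refine List.mem_map.mpr ⟨p.head hpne, List.head_mem hpne, hph⟩
  have hv2 : v ∈ t.map G.s := by
    refine List.mem_map.mpr ⟨t.head ht, List.head_mem ht, ?_⟩
    rw [← hlink, hpl]
  exact hdisj hv1 hv2

end DGraph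

theorem stmt14 {V Edg : Type*} (G : DGraph V Edg) (v : V) (α β : List Edg)
    (hα : G.IsSimpleClosedPathAt α v) (hβ : G.IsSimpleClosedPathAt β v)
    (hαβ : α ≠ β) :
    ∃ w, (w ∈ G.pathVerts α ∨ w ∈ G.pathVerts β) ∧
      ∃ e f : Edg, e ≠ f ∧ G.s e = w ∧ G.s f = w ∧
        G.Reaches (G.r e) w ∧ G.Reaches (G.r f) w := by
  obtain ⟨⟨hαne, hαc, hαh, hαl⟩, hαnd⟩ := hα
  obtain ⟨⟨hβne, hβc, hβh, hβl⟩, hβnd⟩ := hβ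
  rcases DGraph.firstDiff α β hαβ with ⟨p, a, b, e, f, hA, hB, hef⟩ | ⟨t, ht, hT⟩ | ⟨t, ht, hT⟩
  · -- common prefix then differ
    have hse : G.s f = G.s e := by
      cases p with
      | nil =>
        simp only [List.nil_append] at hA hB
        subst hA; subst hB
        simp only [List.head_cons] at hαh hβh
        rw [hαh, hβh]
      | cons c p' =>
        have hpne : (c :: p') ≠ [] := List.cons_ne_nil _ _
        have h1 : G.r ((c :: p').getLast hpne) = G.s e := by
          have := (List.isChain_append.mp (hA ▸ hαc)).2.2
          exact this _ (by simp [List.getLast?_eq_getLast hpne]) _ rfl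
        have h2 : G.r ((c :: p').getLast hpne) = G.s f := by
          have := (List.isChain_append.mp (hB ▸ hβc)).2.2
          exact this _ (by simp [List.getLast?_eq_getLast hpne]) _ rfl
        rw [← h1, ← h2]
    have heα : e ∈ α := by rw [hA]; simp
    have hfβ : f ∈ β := by rw [hB]; simp
    have hre : G.Reaches (G.r e) (G.s e) := by
      have h1 := DGraph.reach_end G α hαc e heα hαne
      rw [hαl] at h1
      have h2 := DGraph.reach_src G α hαc e heα hαne
      rw [hαh] at h2
      exact h1.trans h2
    have hrf : G.Reaches (G.r f) (G.s e) := by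
      have h1 := DGraph.reach_end G β hβc f hfβ hβne
      rw [hβl] at h1
      have h2 := DGraph.reach_src G β hβc f hfβ hβne
      rw [hβh] at h2
      rw [← hse]
      exact h1.trans h2
    exact ⟨G.s e, Or.inl ⟨e, heα, rfl⟩, e, f, hef, rfl, hse, hre, hrf⟩
  · exact absurd (DGraph.no_proper_extension G v β t ht (hT ▸ hαc) (hT ▸ hαnd)
      ⟨hβne, hβc, hβh, hβl⟩) (fun h => h)
  · exact absurd (DGraph.no_proper_extension G v α t ht (hT ▸ hβc) (hT ▸ hβnd)
      ⟨hαne, hαc, hαh, hαl⟩) (fun h => h)
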